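/- If f : {0,1}^n → {0,1} is computed by a Boolean circuit (over ∧, ∨, ¬ with fan-in 2 ∧/∨ gates and access to inputs) using at most k negation gates, then f is computed by a monotone decision tree of height k + 1. -/
import Mathlib


inductive MDT (n : ℕ) : Type where
  | leaf : Bool → MDT n
  | node : ((Fin n → Bool) → Bool) → MDT n → MDT n → MDT n

def MDT.eval {n : ℕ} : MDT n → (Fin n → Bool) → Bool
  | .leaf b, _ => b
  | .node q t0 t1, x => if q x then t1.eval x else t0.eval x

def MDT.height {n : ℕ} : MDT n → ℕ
  | .leaf _ => 0
  | .node _ t0 t1 => max t0.height t1.height + 1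

def MDT.size {n : ℕ} : MDT n → ℕ
  | .leaf _ => 1
  | .node _ t0 t1 => t0.size + t1.size

def MDT.MonoQueries {n : ℕ} : MDT n → Prop
  | .leaf _ => True
  | .node q t0 t1 => Monotone q ∧ t0.MonoQueries ∧ t1.MonoQueries

inductive Circuit (n : ℕ) : Type where
  | var : Fin n → Circuit n
  | const : Bool → Circuit n
  | and : Circuit n → Circuit n → Circuit n
  | or : Circuit n → Circuit n → Circuit n
  | not : Circuit n → Circuit n

def Circuit.eval {n : ℕ} : Circuit n → (Fin n → Bool) → Bool
  | .var i, x => x i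
  | .const b, _ => b
  | .and c1 c2, x => c1.eval x && c2.eval x
  | .or c1 c2, x => c1.eval x || c2.eval x
  | .not c, x => !(c.eval x)

def Circuit.negCount {n : ℕ} : Circuit n → ℕ
  | .var _ => 0
  | .const _ => 0
  | .and c1 c2 => c1.negCount + c2.negCount
  | .or c1 c2 => c1.negCount + c2.negCount
  | .not c => c.negCount + 1

lemma mono_of_negfree {n : ℕ} (C : Circuit n) (h : C.negCount = 0) :
    Monotone C.eval := by
  induction C with
  | var i => intro x y hxy; exact hxy i
  | const b => intro x y hxy; exact le_refl _
  | and c1 c2 ih1 ih2 =>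
      simp [Circuit.negCount] at h
      intro x y hxy
      simp only [Circuit.eval]
      have a := ih1 h.1 hxy
      have b := ih2 h.2 hxy
      revert a b
      cases c1.eval x <;> cases c2.eval x <;> cases c1.eval y <;> cases c2.eval y <;> simp
  | or c1 c2 ih1 ih2 =>
      simp [Circuit.negCount] at h
      intro x y hxy
      simp only [Circuit.eval]
      have a := ih1 h.1 hxy
      have b := ih2 h.2 hxy
      revert a b
      cases c1.eval x <;> cases c2.eval x <;> cases c1.eval y <;> cases c2.eval y <;> simp
  | not c ih => simp [Circuit.negCount] at h

/-- Argument of a bottom-most negation gate (junk if no negation). -/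
def Circuit.extract {n : ℕ} : Circuit n → Circuit n
  | .var i => .var i
  | .const b => .const b
  | .and c1 c2 => if c1.negCount = 0 then c2.extract else c1.extract
  | .or c1 c2 => if c1.negCount = 0 then c2.extract else c1.extract
  | .not c => if c.negCount = 0 then c else c.extract

/-- Replace the bottom-most negation gate by the constant b. -/
def Circuit.repl {n : ℕ} (b : Bool) : Circuit n → Circuit n
  | .var i => .var i
  | .const c => .const c
  | .and c1 c2 => if c1.negCount = 0 then .and c1 (c2.repl b) else .and (c1.repl b) c2
  | .or c1 c2 => if c1.negCount = 0 then .or c1 (c2.repl b) else .or (c1.repl b) c2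
  | .not c => if c.negCount = 0 then .const b else .not (c.repl b)

lemma extract_negfree {n : ℕ} (C : Circuit n) (h : C.negCount ≠ 0) :
    C.extract.negCount = 0 := by
  induction C with
  | var i => simp [Circuit.negCount] at h
  | const b => simp [Circuit.negCount] at h
  | and c1 c2 ih1 ih2 =>
      simp only [Circuit.extract]
      by_cases h1 : c1.negCount = 0
      · simp only [h1, if_true]
        apply ih2; simp [Circuit.negCount, h1] at h; exact h
      · simp only [h1, if_false]; exact ih1 h1
  | or c1 c2 ih1 ih2 =>
      simp only [Circuit.extract]
      by_cases h1 : c1.negCount = 0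
      · simp only [h1, if_true]
        apply ih2; simp [Circuit.negCount, h1] at h; exact h
      · simp only [h1, if_false]; exact ih1 h1
  | not c ih =>
      simp only [Circuit.extract]
      by_cases h1 : c.negCount = 0
      · simp [h1]
      · simp only [h1, if_false]; exact ih h1

lemma repl_negCount {n : ℕ} (C : Circuit n) (b : Bool) (h : C.negCount ≠ 0) :
    (C.repl b).negCount + 1 = C.negCount := by
  induction C with
  | var i => simp [Circuit.negCount] at h
  | const c => simp [Circuit.negCount] at h
  | and c1 c2 ih1 ih2 =>
      simp only [Circuit.repl]
      by_cases h1 : c1.negCount = 0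
      · have h2 : c2.negCount ≠ 0 := by simp [Circuit.negCount, h1] at h; exact h
        simp only [h1, if_true, Circuit.negCount]
        have := ih2 h2; omega
      · simp only [h1, if_false, Circuit.negCount]
        have := ih1 h1; omega
  | or c1 c2 ih1 ih2 =>
      simp only [Circuit.repl]
      by_cases h1 : c1.negCount = 0
      · have h2 : c2.negCount ≠ 0 := by simp [Circuit.negCount, h1] at h; exact h
        simp only [h1, if_true, Circuit.negCount]
        have := ih2 h2; omega
      · simp only [h1, if_false, Circuit.negCount]
        have := ih1 h1; omega
  | not c ih =>
      simp only [Circuit.repl]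
      by_cases h1 : c.negCount = 0
      · simp [h1, Circuit.negCount]
      · simp only [h1, if_false, Circuit.negCount]
        have := ih h1; omega

lemma repl_eval {n : ℕ} (C : Circuit n) (h : C.negCount ≠ 0) (x : Fin n → Bool) :
    (C.repl (!(C.extract.eval x))).eval x = C.eval x := by
  induction C with
  | var i => simp [Circuit.negCount] at h
  | const c => simp [Circuit.negCount] at h
  | and c1 c2 ih1 ih2 =>
      by_cases h1 : c1.negCount = 0
      · have h2 : c2.negCount ≠ 0 := by simp [Circuit.negCount, h1] at h; exact h
        simp only [Circuit.repl, Circuit.extract, h1, if_true, Circuit.eval, ih2 h2]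
      · simp only [Circuit.repl, Circuit.extract, h1, if_false, Circuit.eval, ih1 h1]
  | or c1 c2 ih1 ih2 =>
      by_cases h1 : c1.negCount = 0
      · have h2 : c2.negCount ≠ 0 := by simp [Circuit.negCount, h1] at h; exact h
        simp only [Circuit.repl, Circuit.extract, h1, if_true, Circuit.eval, ih2 h2]
      · simp only [Circuit.repl, Circuit.extract, h1, if_false, Circuit.eval, ih1 h1]
  | not c ih =>
      by_cases h1 : c.negCount = 0
      · simp [Circuit.repl, Circuit.extract, h1, Circuit.eval]
      · simp only [Circuit.repl, Circuit.extract, h1, if_false, Circuit.eval, ih h1]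

lemma main_aux {n : ℕ} : ∀ (k : ℕ) (C : Circuit n), C.negCount ≤ k →
    ∃ T : MDT n, T.MonoQueries ∧ (∀ x, T.eval x = C.eval x) ∧ T.height ≤ k + 1 := by
  intro k
  induction k with
  | zero =>
      intro C hC
      refine ⟨.node C.eval (.leaf false) (.leaf true), ⟨mono_of_negfree C (Nat.le_zero.mp hC), trivial, trivial⟩, ?_, ?_⟩
      · intro x
        simp only [MDT.eval]
        by_cases h : C.eval x <;> simp [h]
      · simp [MDT.height]
  | succ k ih =>
      intro C hC
      by_cases h : C.negCount = 0
      · refine ⟨.node C.eval (.leaf false) (.leaf true), ⟨mono_of_negfree C h, trivial, trivial⟩, ?_, ?_⟩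
        · intro x
          simp only [MDT.eval]
          by_cases hx : C.eval x <;> simp [hx]
        · simp [MDT.height]
      · obtain ⟨T0, hm0, he0, hh0⟩ := ih (C.repl true) (by have := repl_negCount C true h; omega)
        obtain ⟨T1, hm1, he1, hh1⟩ := ih (C.repl false) (by have := repl_negCount C false h; omega)
        refine ⟨.node C.extract.eval T0 T1,
          ⟨mono_of_negfree _ (extract_negfree C h), hm0, hm1⟩, ?_, ?_⟩
        · intro x
          have := repl_eval C h x
          simp only [MDT.eval]
          by_cases hx : C.extract.eval x
          · simp only [hx, if_true, he1 x]
            rw [hx] at this; simpa using this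
          · simp only [hx, if_false, he0 x]
            rw [Bool.not_eq_true] at hx
            rw [hx] at this; simpa using this
        · simp only [MDT.height]
          omega

/-- A function computed by a circuit with at most k negation gates is computed by
a monotone decision tree of height k + 1. -/
theorem circuit_to_mdt (n k : ℕ) (f : (Fin n → Bool) → Bool) (C : Circuit n)
    (hC : ∀ x, C.eval x = f x) (hneg : C.negCount ≤ k) :
    ∃ T : MDT n, T.MonoQueries ∧ (∀ x, T.eval x = f x) ∧ T.height ≤ k + 1 := by
  obtain ⟨T, hm, he, hh⟩ := main_aux k C hneg
  exact ⟨T, hm, fun x => (he x).trans (hC x), hh⟩
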